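/- A tournament D with terminal set T has a T-feedback arc set of size at most k if and only if there exists a linear order σ of V(D) whose cost (the number of backward arcs with respect to σ whose span contains at least one terminal) is at most k. -/

import Mathlib

/-- A tournament: irreflexive, and exactly one arc between each pair of distinct vertices. -/
def IsTournament {V : Type} (A : V → V → Prop) : Prop :=
  (∀ v, ¬ A v v) ∧ ∀ u v : V, u ≠ v → (A u v ↔ ¬ A v u)

/-- There is a closed directed walk passing through a terminal of `T` (a `T`-cycle). -/
def HasTCycle {V : Type} (A : V → V → Prop) (T : Set V) : Prop :=
  ∃ (v : V) (l : List V), List.Chain A v (l ++ [v]) ∧ (v ∈ T ∨ ∃ t ∈ l, t ∈ T)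

/-- `S` is a `T`-feedback arc set of the digraph `A`. -/
def IsTFAS {V : Type} (A : V → V → Prop) (T : Set V) (S : Set (V × V)) : Prop :=
  (∀ e ∈ S, A e.1 e.2) ∧ ¬ HasTCycle (fun u w => A u w ∧ (u, w) ∉ S) T

/-- A minimum `T`-feedback arc set. -/
def MinTFAS {V : Type} (A : V → V → Prop) (T : Set V) (S : Set (V × V)) : Prop :=
  IsTFAS A T S ∧ ∀ S' : Set (V × V), IsTFAS A T S' → S.ncard ≤ S'.ncard

/-- The digraph obtained from `A` by reversing the arc `e`. -/
def revArc {V : Type} (A : V → V → Prop) (e : V × V) : V → V → Prop :=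
  fun u w => ((u, w) ≠ e ∧ A u w) ∨ (w, u) = e

/-- `p = (i, j)` is a backward arc w.r.t. the order `σ`: `j < i` and the arc goes
from the `i`-th vertex to the `j`-th vertex. -/
def Backward {n : ℕ} (A : Fin n → Fin n → Prop) (σ : Equiv.Perm (Fin n))
    (p : Fin n × Fin n) : Prop :=
  p.2 < p.1 ∧ A (σ p.1) (σ p.2)

/-- A backward arc whose span contains a terminal (an affected arc), as a pair of positions. -/
def AffectedPair {n : ℕ} (A : Fin n → Fin n → Prop) (σ : Equiv.Perm (Fin n))
    (T : Set (Fin n)) (p : Fin n × Fin n) : Prop :=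
  Backward A σ p ∧ ∃ m : Fin n, p.2 ≤ m ∧ m ≤ p.1 ∧ σ m ∈ T

/-- The cost of an order: the number of affected arcs. -/
noncomputable def cost {n : ℕ} (A : Fin n → Fin n → Prop) (σ : Equiv.Perm (Fin n))
    (T : Set (Fin n)) : ℕ :=
  {p : Fin n × Fin n | AffectedPair A σ T p}.ncard

/-- The interval of positions `[l, r]` contains no terminal. -/
def NonTerm {n : ℕ} (σ : Equiv.Perm (Fin n)) (T : Set (Fin n)) (l r : Fin n) : Prop :=
  ∀ m : Fin n, l ≤ m → m ≤ r → σ m ∉ T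

/-- Number of out-neighbors of the `i`-th vertex among the vertices in positions `[l, r]`. -/
noncomputable def outIn {n : ℕ} (A : Fin n → Fin n → Prop) (σ : Equiv.Perm (Fin n))
    (l r i : Fin n) : ℕ :=
  {m : Fin n | l ≤ m ∧ m ≤ r ∧ A (σ i) (σ m)}.ncard

/-- Number of in-neighbors of the `i`-th vertex among the vertices in positions `[l, r]`. -/
noncomputable def inIn {n : ℕ} (A : Fin n → Fin n → Prop) (σ : Equiv.Perm (Fin n))
    (l r i : Fin n) : ℕ :=
  {m : Fin n | l ≤ m ∧ m ≤ r ∧ A (σ m) (σ i)}.ncard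

/-- A regular order: in each non-terminal interval `[l, r]`, the left endpoint has at least
`⌈(r-l)/2⌉` out-neighbors inside, and the right endpoint at least `⌈(r-l)/2⌉` in-neighbors. -/
def Regular {n : ℕ} (A : Fin n → Fin n → Prop) (σ : Equiv.Perm (Fin n))
    (T : Set (Fin n)) : Prop :=
  ∀ l r : Fin n, l ≤ r → NonTerm σ T l r →
    ((r : ℕ) - (l : ℕ) + 1) / 2 ≤ outIn A σ l r l ∧
    ((r : ℕ) - (l : ℕ) + 1) / 2 ≤ inIn A σ l r r

/-- A maximal non-terminal interval. -/
def MaxNonTerm {n : ℕ} (σ : Equiv.Perm (Fin n)) (T : Set (Fin n)) (l r : Fin n) : Prop :=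
  l ≤ r ∧ NonTerm σ T l r ∧
    ∀ l' r' : Fin n, l' ≤ l → r ≤ r' → NonTerm σ T l' r' → l' = l ∧ r' = r

/-- The `i`-th vertex is rich in `[l, r]`: at least `d` in- and out-neighbors inside. -/
def RichAt {n : ℕ} (A : Fin n → Fin n → Prop) (σ : Equiv.Perm (Fin n)) (d : ℕ)
    (l r i : Fin n) : Prop :=
  d ≤ outIn A σ l r i ∧ d ≤ inIn A σ l r i

/-- The `i`-th vertex is in-rich in `[l, r]`: at most `d - 1` out-neighbors inside. -/
def InRichAt {n : ℕ} (A : Fin n → Fin n → Prop) (σ : Equiv.Perm (Fin n)) (d : ℕ)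
    (l r i : Fin n) : Prop :=
  outIn A σ l r i ≤ d - 1

/-- The `i`-th vertex is out-rich in `[l, r]`: at most `d - 1` in-neighbors inside. -/
def OutRichAt {n : ℕ} (A : Fin n → Fin n → Prop) (σ : Equiv.Perm (Fin n)) (d : ℕ)
    (l r i : Fin n) : Prop :=
  inIn A σ l r i ≤ d - 1

/-- The `i`-th vertex is not an endpoint of any affected arc. -/
def UnaffectedAt {n : ℕ} (A : Fin n → Fin n → Prop) (σ : Equiv.Perm (Fin n))
    (T : Set (Fin n)) (i : Fin n) : Prop :=
  ∀ p : Fin n × Fin n, AffectedPair A σ T p → p.1 ≠ i ∧ p.2 ≠ i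

/-- A directed path (as a list of vertices) from `a` to `b` in the digraph `A`. -/
def DPath {V : Type} (A : V → V → Prop) (a b : V) (p : List V) : Prop :=
  p ≠ [] ∧ p.head? = some a ∧ p.getLast? = some b ∧ p.Chain' A

/-- A path of positions from position `a` to position `b` using only forward arcs of `σ`. -/
def FwdPath {n : ℕ} (A : Fin n → Fin n → Prop) (σ : Equiv.Perm (Fin n))
    (a b : Fin n) (p : List (Fin n)) : Prop :=
  p ≠ [] ∧ p.head? = some a ∧ p.getLast? = some b ∧
    p.Chain' (fun x y => x < y ∧ A (σ x) (σ y))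

/-- The arcs traversed by a path given as a list of vertices. -/
def parcs {V : Type} (p : List V) : List (V × V) := p.zip p.tail

/-- A family of pairwise arc-disjoint paths. -/
def ArcDisjoint {V ι : Type} (P : ι → List V) : Prop :=
  ∀ i j : ι, i ≠ j → ∀ e ∈ parcs (P i), e ∉ parcs (P j)

/-- Reduction Rule 4 (k+1 arc-disjoint forward paths through a terminal above a
backward arc) is applicable. -/
def RuleKC {n : ℕ} (A : Fin n → Fin n → Prop) (σ : Equiv.Perm (Fin n))
    (T : Set (Fin n)) (k : ℕ) : Prop :=
  ∃ l r : Fin n, l < r ∧ A (σ r) (σ l) ∧ ∃ m : Fin n, l ≤ m ∧ m ≤ r ∧ σ m ∈ T ∧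
    ∃ P : Fin (k + 1) → List (Fin n),
      (∀ i, FwdPath A σ l r (P i) ∧ m ∈ P i) ∧ ArcDisjoint P

/-- The digraph has no closed directed walk. -/
def AcyclicRel {V : Type} (A : V → V → Prop) : Prop :=
  ∀ (v : V) (l : List V), ¬ List.Chain A v (l ++ [v])

private lemma sum_range_two_pow (N : ℕ) : ∑ i ∈ Finset.range N, 2 ^ i = 2 ^ N - 1 := by
  induction N with
  | zero => simp
  | succ k ih =>
    rw [Finset.sum_range_succ, ih]
    have h1 : (1 : ℕ) ≤ 2 ^ k := Nat.one_le_two_pow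
    have h2 : 2 ^ (k + 1) = 2 ^ k * 2 := pow_succ 2 k
    omega

private lemma sum_two_pow_inj {s t : Finset ℕ}
    (h : ∑ i ∈ s, 2 ^ i = ∑ i ∈ t, 2 ^ i) : s = t :=
  Finset.geomSum_injective (le_refl 2) h

private lemma chain_snoc {α : Type} {r : α → α → Prop} {b : α} :
    ∀ {a : α} {l : List α}, List.Chain r a l →
      r ((a :: l).getLast (List.cons_ne_nil a l)) b → List.Chain r a (l ++ [b])
  | a, [], _, hr => by simpa [List.Chain] using hr
  | a, c :: l, h, hr => by
    rw [List.Chain, List.isChain_cons_cons] at h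
    refine List.isChain_cons_cons.2 ⟨h.1, chain_snoc h.2 ?_⟩
    simpa [List.getLast_cons_cons] using hr

private lemma chain_glue {α : Type} {r : α → α → Prop} {t u v : α}
    (h1 : Relation.ReflTransGen r t u) (h2 : r u v) (h3 : Relation.ReflTransGen r v t) :
    ∃ l : List α, List.Chain r t (l ++ [t]) := by
  obtain ⟨l1, hc1, hl1⟩ := List.exists_isChain_cons_of_relationReflTransGen h1
  obtain ⟨l2, hc2, hl2⟩ := List.exists_isChain_cons_of_relationReflTransGen h3
  have hchain : List.Chain r t (l1 ++ v :: l2) := by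
    rw [List.Chain, List.isChain_cons_split]
    exact ⟨chain_snoc hc1 (by rw [hl1]; exact h2), hc2⟩
  have hlast : (l1 ++ v :: l2).getLast (by simp) = t := by
    rw [List.getLast_append_of_right_ne_nil _ _ (List.cons_ne_nil v l2)]
    exact hl2
  refine ⟨(l1 ++ v :: l2).dropLast, ?_⟩
  have hdl := List.dropLast_append_getLast (l := l1 ++ v :: l2) (by simp)
  rw [hlast] at hdl
  rw [hdl]
  exact hchain

private lemma pairmap_inj {n : ℕ} (σ : Equiv.Perm (Fin n)) :
    Function.Injective (fun p : Fin n × Fin n => (σ p.1, σ p.2)) := by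
  intro p q h
  simp only [Prod.mk.injEq] at h
  exact Prod.ext (σ.injective h.1) (σ.injective h.2)

private lemma crossing {n : ℕ} {A' : Fin n → Fin n → Prop} (hirr : ∀ x, ¬ A' x x)
    (σ : Equiv.Perm (Fin n)) {T : Set (Fin n)} (h : HasTCycle A' T) :
    ∃ p : Fin n × Fin n, p.2 < p.1 ∧ A' (σ p.1) (σ p.2) ∧
      ∃ m : Fin n, p.2 ≤ m ∧ m ≤ p.1 ∧ σ m ∈ T := by
  by_contra hcon
  push_neg at hcon
  obtain ⟨v, l, hc, hT⟩ := h
  set W : ℕ → Fin n := fun i => (v :: (l ++ [v])).getD i v with hW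
  have hlen : (v :: (l ++ [v])).length = l.length + 2 := by simp
  have hc' : (v :: (l ++ [v])).Chain' A' := hc
  rw [List.Chain', List.isChain_iff_getElem] at hc'
  have hgetD : ∀ i, (hi : i < l.length + 2) →
      W i = (v :: (l ++ [v])).get ⟨i, by omega⟩ := by
    intro i hi
    exact List.getD_eq_getElem _ _ (by omega)
  have hadj : ∀ i, i < l.length + 1 → A' (W i) (W (i + 1)) := by
    intro i hi
    rw [hgetD i (by omega), hgetD (i + 1) (by omega)]
    exact hc' i (by rw [hlen]; omega)
  have hW0 : W 0 = v := List.getD_cons_zero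
  have hWlast : W (l.length + 1) = v := by
    rw [hW]
    simp only [List.getD_cons_succ]
    rw [List.getD_append_right _ _ _ _ (le_refl l.length)]
    simp
  obtain ⟨i0, hi0, hτ⟩ : ∃ i0, i0 < l.length + 1 ∧ W i0 ∈ T := by
    rcases hT with hv | ⟨t, ht, htT⟩
    · exact ⟨0, by omega, hW0 ▸ hv⟩
    · obtain ⟨j, rfl⟩ := List.mem_iff_get.1 ht
      refine ⟨(j : ℕ) + 1, by omega, ?_⟩
      rw [hW]
      simp only [List.getD_cons_succ]
      rw [List.getD_append _ _ _ _ (by omega)]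
      rw [List.getD_eq_getElem _ _ (by omega)]
      simpa using htT
  set m := σ.symm (W i0) with hm
  have hσm : σ m ∈ T := by
    rw [hm, Equiv.apply_symm_apply]
    exact hτ
  have hstep : ∀ i, i < l.length + 1 → m ≤ σ.symm (W i) → m < σ.symm (W (i + 1)) := by
    intro i hi hle
    by_contra hno
    push_neg at hno
    rcases eq_or_ne (σ.symm (W (i + 1))) (σ.symm (W i)) with heq | hne
    · have hWeq : W (i + 1) = W i := σ.symm.injective heq
      exact hirr (W i) (hWeq ▸ hadj i hi)
    · have hlt : σ.symm (W (i + 1)) < σ.symm (W i) := lt_of_le_of_ne (hno.trans hle) hne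
      exact hcon (σ.symm (W i), σ.symm (W (i + 1))) hlt
        (by simpa using hadj i hi) m hno hle hσm
  have hclimb : ∀ d i, i + d ≤ l.length + 1 → m ≤ σ.symm (W i) →
      m ≤ σ.symm (W (i + d)) ∧ (0 < d → m < σ.symm (W (i + d))) := by
    intro d
    induction d with
    | zero => intro i _ hle; exact ⟨hle, by omega⟩
    | succ d ih =>
      intro i hdi hle
      have h1 := (ih i (by omega) hle).1
      have h2 : m < σ.symm (W (i + d + 1)) := hstep (i + d) (by omega) h1
      exact ⟨h2.le, fun _ => h2⟩
  have hfin1 : m < σ.symm v := by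
    have hcl := (hclimb (l.length + 1 - i0) i0 (by omega) hm.le).2 (by omega)
    rwa [show i0 + (l.length + 1 - i0) = l.length + 1 from by omega, hWlast] at hcl
  rcases Nat.eq_zero_or_pos i0 with h0 | hpos
  · rw [h0, hW0] at hm
    rw [← hm] at hfin1
    exact lt_irrefl m hfin1
  · have h3 := (hclimb i0 0 (by omega) (by rw [hW0]; exact hfin1.le)).2 hpos
    rw [Nat.zero_add, ← hm] at h3
    exact lt_irrefl m h3

/-- A tournament `A` with terminal set `T` has a `T`-feedback arc set of size
at most `k` iff there is an order `σ` of the vertices with `cost σ ≤ k`. -/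
theorem stmt0 {n : ℕ} (A : Fin n → Fin n → Prop) (hA : IsTournament A)
    (T : Set (Fin n)) (k : ℕ) :
    (∃ S : Set (Fin n × Fin n), IsTFAS A T S ∧ S.ncard ≤ k) ↔
      ∃ σ : Equiv.Perm (Fin n), cost A σ T ≤ k := by
  classical
  constructor
  · rintro ⟨S, hS, hSk⟩
    set A' : Fin n → Fin n → Prop := fun u w => A u w ∧ (u, w) ∉ S with hA'
    set g : Fin n → ℕ :=
      fun x => ∑ y ∈ Finset.univ.filter (fun y => Relation.ReflTransGen A' x y),
        2 ^ (y : ℕ) with hg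
    have hgmono : ∀ x y, Relation.ReflTransGen A' x y → g y ≤ g x := by
      intro x y hxy
      apply Finset.sum_le_sum_of_subset
      intro z hz
      simp only [Finset.mem_filter, Finset.mem_univ, true_and] at hz ⊢
      exact Relation.ReflTransGen.trans hxy hz
    have hgbound : ∀ x, g x < 2 ^ n := by
      intro x
      have h1 : g x ≤ ∑ y : Fin n, 2 ^ (y : ℕ) :=
        Finset.sum_le_sum_of_subset (Finset.filter_subset _ _)
      have h2 : ∑ y : Fin n, 2 ^ (y : ℕ) = 2 ^ n - 1 := by
        rw [Fin.sum_univ_eq_sum_range]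
        exact sum_range_two_pow n
      have h3 : (1 : ℕ) ≤ 2 ^ n := Nat.one_le_two_pow
      omega
    have hgeq : ∀ x y, g x = g y →
        Relation.ReflTransGen A' x y ∧ Relation.ReflTransGen A' y x := by
      intro x y hxy
      have hinj : ∀ (s : Finset (Fin n)), ∀ a ∈ s, ∀ b ∈ s, (a : ℕ) = (b : ℕ) → a = b :=
        fun _ a _ b _ h => Fin.val_injective h
      have himg : (Finset.univ.filter (fun z => Relation.ReflTransGen A' x z)).image
            (Fin.val) =
          (Finset.univ.filter (fun z => Relation.ReflTransGen A' y z)).image Fin.val := by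
        apply sum_two_pow_inj
        rw [Finset.sum_image (hinj _), Finset.sum_image (hinj _)]
        exact hxy
      have hset := Finset.image_injective Fin.val_injective himg
      constructor
      · have hy : y ∈ Finset.univ.filter (fun z => Relation.ReflTransGen A' y z) := by
          simp only [Finset.mem_filter, Finset.mem_univ, true_and]
          exact Relation.ReflTransGen.refl
        rw [← hset] at hy
        simpa using hy
      · have hx : x ∈ Finset.univ.filter (fun z => Relation.ReflTransGen A' x z) := by
          simp only [Finset.mem_filter, Finset.mem_univ, true_and]
          exact Relation.ReflTransGen.refl
        rw [hset] at hx
        simpa using hx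
    set f : Fin n → Lex (ℕ × ℕ) := fun x => toLex (2 ^ n - g x, (x : ℕ)) with hf
    have hfinj : Function.Injective f := by
      intro a b hab
      have h2 : ((2 : ℕ) ^ n - g a, (a : ℕ)) = (2 ^ n - g b, (b : ℕ)) :=
        congrArg ofLex hab
      exact Fin.val_injective (congrArg Prod.snd h2)
    set σ : Equiv.Perm (Fin n) := Tuple.sort f with hσ
    have hmono : Monotone (f ∘ σ) := Tuple.monotone_sort f
    have hsm : StrictMono (f ∘ σ) :=
      hmono.strictMono_of_injective (hfinj.comp σ.injective)
    refine ⟨σ, ?_⟩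
    have key : ∀ p : Fin n × Fin n, AffectedPair A σ T p → (σ p.1, σ p.2) ∈ S := by
      rintro ⟨i, j⟩ ⟨⟨hlt, hAij⟩, m, hm1, hm2, hmT⟩
      by_contra hnot
      have harc : A' (σ i) (σ j) := ⟨hAij, hnot⟩
      have hflt : f (σ j) < f (σ i) := hsm hlt
      have hgle : g (σ j) ≤ g (σ i) :=
        hgmono _ _ (Relation.ReflTransGen.single harc)
      have hb1 := hgbound (σ i)
      have hb2 := hgbound (σ j)
      have hb3 := hgbound (σ m)
      rw [hf, Prod.Lex.lt_iff] at hflt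
      simp only [ofLex_toLex] at hflt
      have hguv : g (σ i) = g (σ j) := by
        rcases hflt with h | ⟨h, _⟩ <;> omega
      have hle1 : f (σ j) ≤ f (σ m) := hmono hm1
      have hle2 : f (σ m) ≤ f (σ i) := hmono hm2
      rw [hf, Prod.Lex.le_iff] at hle1 hle2
      simp only [ofLex_toLex] at hle1 hle2
      have hgt : g (σ m) = g (σ i) := by
        rcases hle1 with h | ⟨h, _⟩ <;> rcases hle2 with h' | ⟨h', _⟩ <;> omega
      have hRtu : Relation.ReflTransGen A' (σ m) (σ i) := (hgeq _ _ hgt).1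
      have hRvt : Relation.ReflTransGen A' (σ j) (σ m) :=
        (hgeq _ _ (by omega : g (σ j) = g (σ m))).1
      obtain ⟨lc, hlc⟩ := chain_glue hRtu harc hRvt
      exact hS.2 ⟨σ m, lc, hlc, Or.inl hmT⟩
    have hsub : (fun p : Fin n × Fin n => (σ p.1, σ p.2)) ''
        {p | AffectedPair A σ T p} ⊆ S := by
      rintro ⟨a, b⟩ ⟨p, hp, hpe⟩
      rw [← hpe]
      exact key p hp
    calc cost A σ T
        = ((fun p : Fin n × Fin n => (σ p.1, σ p.2)) ''
            {p | AffectedPair A σ T p}).ncard :=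
          (Set.ncard_image_of_injective _ (pairmap_inj σ)).symm
      _ ≤ S.ncard := Set.ncard_le_ncard hsub S.toFinite
      _ ≤ k := hSk
  · rintro ⟨σ, hσ⟩
    refine ⟨(fun p : Fin n × Fin n => (σ p.1, σ p.2)) '' {p | AffectedPair A σ T p},
      ⟨?_, ?_⟩, ?_⟩
    · rintro ⟨a, b⟩ ⟨p, hp, hpe⟩
      cases hpe
      exact hp.1.2
    · intro hcyc
      obtain ⟨p, hlt, ⟨hA0, hnot⟩, m, hm1, hm2, hmT⟩ :=
        crossing (fun x hx => hA.1 x hx.1) σ hcyc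
      exact hnot ⟨p, ⟨⟨hlt, hA0⟩, m, hm1, hm2, hmT⟩, rfl⟩
    · rw [Set.ncard_image_of_injective _ (pairmap_inj σ)]
      exact hσ
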